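/- For a submaximal topological space X, X has disjoint tightness if and only if X has open disjoint tightness. -/

import Mathlib

open Set Filter

/-- A space has open disjoint tightness (ODT) if every accumulation point of an open set `U`
is an accumulation point of two disjoint open subsets of `U`. -/
def HasODT (X : Type*) [TopologicalSpace X] : Prop :=
  ∀ U : Set X, IsOpen U → ∀ x : X, AccPt x (𝓟 U) →
    ∃ U₁ U₂ : Set X, IsOpen U₁ ∧ IsOpen U₂ ∧ U₁ ⊆ U ∧ U₂ ⊆ U ∧ U₁ ∩ U₂ = ∅ ∧
      AccPt x (𝓟 U₁) ∧ AccPt x (𝓟 U₂)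

/-- A space has disjoint tightness if every accumulation point of a set `A` is an
accumulation point of two disjoint subsets of `A`. -/
def HasDT (X : Type*) [TopologicalSpace X] : Prop :=
  ∀ (A : Set X) (x : X), AccPt x (𝓟 A) →
    ∃ A₁ A₂ : Set X, A₁ ⊆ A ∧ A₂ ⊆ A ∧ A₁ ∩ A₂ = ∅ ∧
      AccPt x (𝓟 A₁) ∧ AccPt x (𝓟 A₂)

/-- A space is submaximal if every dense subset is open. -/
def Submaximal (X : Type*) [TopologicalSpace X] : Prop :=
  ∀ D : Set X, Dense D → IsOpen D

/-- In a submaximal space, a nowhere dense set has no accumulation points. -/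
lemma aux_nwd_no_acc {X : Type*} [TopologicalSpace X] (h : Submaximal X)
    {N : Set X} (hN : interior (closure N) = ∅) (x : X) : ¬ AccPt x (𝓟 N) := by
  intro hacc
  have hdense : Dense ((closure N)ᶜ) := by
    rwa [← interior_eq_empty_iff_dense_compl]
  have hD : Dense (Nᶜ ∪ {x}) :=
    Dense.mono (subset_trans (compl_subset_compl.mpr subset_closure)
      (Set.subset_union_left)) hdense
  have hopen : IsOpen (Nᶜ ∪ {x}) := h _ hD
  rw [accPt_iff_nhds] at hacc
  obtain ⟨y, ⟨hy1, hy2⟩, hy3⟩ := hacc (Nᶜ ∪ {x}) (hopen.mem_nhds (Or.inr rfl))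
  rcases hy1 with hy | hy
  · exact hy hy2
  · exact hy3 hy

/-- In a submaximal space, an accumulation point of `A` is an accumulation point of
`A ∩ interior (closure A)`. -/
lemma aux_acc_int {X : Type*} [TopologicalSpace X] (h : Submaximal X)
    {A : Set X} {x : X} (hacc : AccPt x (𝓟 A)) :
    AccPt x (𝓟 (A ∩ interior (closure A))) := by
  set A' := A ∩ interior (closure A) with hA'
  have hsplit : A = A' ∪ (A \ A') := by
    rw [Set.union_diff_cancel (Set.inter_subset_left)]
  have : AccPt x (𝓟 A' ⊔ 𝓟 (A \ A')) := by
    rw [sup_principal, ← hsplit]; exact hacc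
  rcases accPt_sup.mp this with h1 | h2
  · exact h1
  · exfalso
    refine aux_nwd_no_acc h ?_ x h2
    -- A \ A' is nowhere dense
    have hsub : A \ A' ⊆ closure A \ interior (closure A) := by
      intro y hy
      refine ⟨subset_closure hy.1, fun hyi => hy.2 ⟨hy.1, hyi⟩⟩
    have hclosed : IsClosed (closure A \ interior (closure A)) :=
      isClosed_closure.sdiff isOpen_interior
    have hcl : closure (A \ A') ⊆ closure A \ interior (closure A) :=
      closure_minimal hsub hclosed
    have : interior (closure (A \ A')) ⊆ (∅ : Set X) := by
      intro y hy
      have h1 : y ∈ interior (closure A) :=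
        interior_mono (hcl.trans Set.diff_subset) hy
      have h2 : y ∈ closure A \ interior (closure A) :=
        hcl (interior_subset hy)
      exact h2.2 h1
    exact Set.eq_empty_iff_forall_notMem.mpr fun y hy => this hy

/-- In a submaximal space, if `W` is open and `W ⊆ closure A`, then `W ∩ A` is open. -/
lemma aux_inter_open {X : Type*} [TopologicalSpace X] (h : Submaximal X)
    {A W : Set X} (hW : IsOpen W) (hWA : W ⊆ closure A) : IsOpen (W ∩ A) := by
  have hdense : Dense (A ∪ (closure A)ᶜ) := by
    intro y
    by_cases hy : y ∈ closure A
    · exact closure_mono Set.subset_union_left hy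
    · exact subset_closure (Or.inr hy)
  have hopen : IsOpen (A ∪ (closure A)ᶜ) := h _ hdense
  have : W ∩ A = W ∩ (A ∪ (closure A)ᶜ) := by
    ext y
    constructor
    · rintro ⟨h1, h2⟩; exact ⟨h1, Or.inl h2⟩
    · rintro ⟨h1, h2 | h2⟩
      · exact ⟨h1, h2⟩
      · exact absurd (hWA h1) h2
  rw [this]
  exact hW.inter hopen

theorem stmt_18 (X : Type*) [TopologicalSpace X] (h : Submaximal X) :
    HasDT X ↔ HasODT X := by
  constructor
  · -- DT → ODT
    intro hdt U hU x hx
    obtain ⟨A₁, A₂, hA₁U, hA₂U, hdisj, hacc₁, hacc₂⟩ := hdt U x hx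
    have hacc₁' := aux_acc_int h hacc₁
    have hacc₂' := aux_acc_int h hacc₂
    set V₁ := (A₁ ∪ (closure A₁)ᶜ) ∩ interior (closure A₁) with hV₁
    set V₂ := (A₂ ∪ (closure A₂)ᶜ) ∩ interior (closure A₂) with hV₂
    have hdense₁ : Dense (A₁ ∪ (closure A₁)ᶜ) := by
      intro y
      by_cases hy : y ∈ closure A₁
      · exact closure_mono Set.subset_union_left hy
      · exact subset_closure (Or.inr hy)
    have hdense₂ : Dense (A₂ ∪ (closure A₂)ᶜ) := by
      intro y
      by_cases hy : y ∈ closure A₂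
      · exact closure_mono Set.subset_union_left hy
      · exact subset_closure (Or.inr hy)
    have hV₁sub : V₁ ⊆ A₁ := by
      rintro y ⟨h1 | h1, h2⟩
      · exact h1
      · exact absurd (interior_subset h2) h1
    have hV₂sub : V₂ ⊆ A₂ := by
      rintro y ⟨h1 | h1, h2⟩
      · exact h1
      · exact absurd (interior_subset h2) h1
    refine ⟨V₁, V₂, (h _ hdense₁).inter isOpen_interior, (h _ hdense₂).inter isOpen_interior,
      hV₁sub.trans hA₁U, hV₂sub.trans hA₂U, ?_, ?_, ?_⟩
    · apply Set.eq_empty_iff_forall_notMem.mpr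
      intro y hy
      have : y ∈ A₁ ∩ A₂ := ⟨hV₁sub hy.1, hV₂sub hy.2⟩
      rw [hdisj] at this
      exact this
    · refine hacc₁'.mono (principal_mono.mpr ?_)
      rintro y ⟨h1, h2⟩
      exact ⟨Or.inl h1, h2⟩
    · refine hacc₂'.mono (principal_mono.mpr ?_)
      rintro y ⟨h1, h2⟩
      exact ⟨Or.inl h1, h2⟩
  · -- ODT → DT
    intro hodt A x hx
    have hx' := aux_acc_int h hx
    have hxU : AccPt x (𝓟 (interior (closure A))) :=
      hx'.mono (principal_mono.mpr Set.inter_subset_right)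
    obtain ⟨U₁, U₂, hU₁o, hU₂o, hU₁s, hU₂s, hdisj, hacc₁, hacc₂⟩ :=
      hodt (interior (closure A)) isOpen_interior x hxU
    have key : ∀ (U : Set X), IsOpen U → U ⊆ interior (closure A) → AccPt x (𝓟 U) →
        AccPt x (𝓟 (U ∩ A)) := by
      intro U hUo hUs hUacc
      rw [accPt_iff_nhds] at hUacc ⊢
      intro N hN
      obtain ⟨N', hN'sub, hN'o, hxN'⟩ := mem_nhds_iff.mp hN
      obtain ⟨y, ⟨hy1, hy2⟩, hy3⟩ := hUacc N' (hN'o.mem_nhds hxN')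
      set W := N' ∩ U with hW
      have hWo : IsOpen W := hN'o.inter hUo
      have hWcl : W ⊆ closure A := fun z hz => interior_subset (hUs hz.2)
      have hWAo : IsOpen (W ∩ A) := aux_inter_open h hWo hWcl
      have hWAne : (W ∩ A).Nonempty := by
        rcases (mem_closure_iff.mp (hWcl ⟨hy1, hy2⟩)) W hWo ⟨hy1, hy2⟩ with ⟨z, hz1, hz2⟩
        exact ⟨z, hz1, hz2⟩
      -- W ∩ A must contain a point ≠ x
      by_cases hcase : ∃ z ∈ W ∩ A, z ≠ x
      · obtain ⟨z, ⟨hz1, hz2⟩, hz3⟩ := hcase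
        exact ⟨z, ⟨hN'sub hz1.1, hz1.2, hz2⟩, hz3⟩
      · exfalso
        push_neg at hcase
        have hWA : W ∩ A = {x} := by
          apply Set.eq_singleton_iff_nonempty_unique_mem.mpr
          exact ⟨hWAne, fun z hz => hcase z hz⟩
        have hxmem : x ∈ W ∩ A := hWA ▸ Set.mem_singleton x
        rw [accPt_iff_nhds] at hx
        obtain ⟨w, ⟨hw1, hw2⟩, hw3⟩ := hx {x} (hWA ▸ hWAo.mem_nhds hxmem)
        exact hw3 hw1
    refine ⟨U₁ ∩ A, U₂ ∩ A, Set.inter_subset_right, Set.inter_subset_right, ?_,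
      key U₁ hU₁o hU₁s hacc₁, key U₂ hU₂o hU₂s hacc₂⟩
    apply Set.eq_empty_iff_forall_notMem.mpr
    intro y hy
    have : y ∈ U₁ ∩ U₂ := ⟨hy.1.1, hy.2.1⟩
    rw [hdisj] at this
    exact this
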